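/- Let F_n be the empirical cdf of n i.i.d. samples from continuous cdf F and let F̂_h be the kernel-smoothed cdf with bandwidth h_n = a n^{−1/5}, a > 0, based on a symmetric compactly supported kernel. Fix x with f'(x) ≠ 0 and f twice continuously differentiable near x. Then for every c > 0, P(√n |F̂_{h_n}(x) − F_n(x)| ≤ c) → 0 as n → ∞. -/

import Mathlib

open MeasureTheory ProbabilityTheory Set Filter



lemma mem_uIcc_abs {x t u : ℝ} (hu : u ∈ uIcc x t) : |u - x| ≤ |t - x| := by
  rcases mem_uIcc.1 hu with ⟨h1, h2⟩ | ⟨h1, h2⟩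
  · rw [abs_of_nonneg (by linarith), abs_of_nonneg (by linarith)]; linarith
  · rw [abs_of_nonpos (by linarith), abs_of_nonpos (by linarith)]; linarith

lemma taylor2' {f f' f'' F : ℝ → ℝ}
    (hF : ∀ y, HasDerivAt F (f y) y) (hf : ∀ y, HasDerivAt f (f' y) y)
    (hf' : ∀ y, HasDerivAt f' (f'' y) y) {M : ℝ} (hM : ∀ y, |f'' y| ≤ M) (x t : ℝ) :
    |F t - F x - (t - x) * f x - (t - x) ^ 2 / 2 * f' x| ≤ M * |t - x| ^ 3 := by
  have hM0 : 0 ≤ M := le_trans (abs_nonneg _) (hM x)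
  have step1 : ∀ s : ℝ, |f' s - f' x| ≤ M * |s - x| := by
    intro s
    have := Convex.norm_image_sub_le_of_norm_hasDerivWithin_le
      (f := f') (f' := f'') (s := (univ : Set ℝ))
      (fun u _ => (hf' u).hasDerivWithinAt) (fun u _ => by simpa using hM u)
      convex_univ (mem_univ x) (mem_univ s)
    simpa [Real.norm_eq_abs] using this
  set ψ : ℝ → ℝ := fun s => f s - f x - (s - x) * f' x with hψ
  have hψd : ∀ s, HasDerivAt ψ (f' s - f' x) s := by
    intro s
    have : HasDerivAt (fun s => f s - f x - (s - x) * f' x) (f' s - 1 * f' x) s :=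
      ((hf s).sub_const (f x)).sub (((hasDerivAt_id s).sub_const x).mul_const (f' x))
    simpa using this
  have hconv : Convex ℝ (uIcc x t) := convex_uIcc x t
  have step2 : ∀ s ∈ uIcc x t, |ψ s| ≤ (M * |t - x|) * |s - x| := by
    intro s hs
    have := Convex.norm_image_sub_le_of_norm_hasDerivWithin_le
      (f := ψ) (f' := fun u => f' u - f' x) (s := uIcc x t)
      (fun u _ => (hψd u).hasDerivWithinAt)
      (fun u hu => by
        have := (step1 u).trans (mul_le_mul_of_nonneg_left (mem_uIcc_abs hu) hM0)
        simpa [Real.norm_eq_abs] using this)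
      hconv left_mem_uIcc hs
    have hψx : ψ x = 0 := by simp [hψ]
    simpa [Real.norm_eq_abs, hψx] using this
  set G : ℝ → ℝ := fun s => F s - F x - (s - x) * f x - (s - x) ^ 2 / 2 * f' x with hG
  have hGd : ∀ s, HasDerivAt G (ψ s) s := by
    intro s
    have h1 : HasDerivAt (fun s : ℝ => (s - x) ^ 2 / 2 * f' x)
        ((2 * (s - x) ^ 1 * 1) / 2 * f' x) s :=
      ((((hasDerivAt_id s).sub_const x).pow 2).div_const 2).mul_const (f' x)
    have h2 : HasDerivAt (fun s => F s - F x - (s - x) * f x) (f s - 1 * f x) s :=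
      ((hF s).sub_const (F x)).sub (((hasDerivAt_id s).sub_const x).mul_const (f x))
    have : HasDerivAt G (f s - 1 * f x - 2 * (s - x) ^ 1 * 1 / 2 * f' x) s := h2.sub h1
    convert this using 1
    show f s - f x - (s - x) * f' x = _; ring
  have step3 := Convex.norm_image_sub_le_of_norm_hasDerivWithin_le
    (f := G) (f' := ψ) (s := uIcc x t)
    (fun u _ => (hGd u).hasDerivWithinAt)
    (fun u hu => by
      have h1 := (step2 u hu).trans
        (mul_le_mul_of_nonneg_left (mem_uIcc_abs hu) (by positivity))
      simpa [Real.norm_eq_abs] using h1)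
    hconv left_mem_uIcc right_mem_uIcc
  have hGx : G x = 0 := by simp [hG]
  have : |G t| ≤ M * |t - x| * |t - x| * |t - x| := by
    simpa [Real.norm_eq_abs, hGx] using step3
  calc |F t - F x - (t - x) * f x - (t - x) ^ 2 / 2 * f' x| = |G t| := rfl
    _ ≤ M * |t - x| * |t - x| * |t - x| := this
    _ = M * |t - x| ^ 3 := by ring

lemma K_exists_R' {k K : ℝ → ℝ} (hkint : Integrable k)
    (hK : ∀ u, K u = ∫ v in Iic u, k v)
    (hksupp : HasCompactSupport k) (hkprob : ∫ v, k v = 1) :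
    ∃ R : ℝ, 0 < R ∧ (∀ u, R ≤ u → K u = 1) ∧ (∀ u, u < -R → K u = 0) ∧
      (∀ v, R < |v| → k v = 0) := by
  obtain ⟨r, hr⟩ := hksupp.isBounded.subset_closedBall 0
  refine ⟨max r 1, lt_of_lt_of_le one_pos (le_max_right _ _), ?_, ?_, ?_⟩
  · intro u hu
    have hz : ∀ v ∈ Ioi u, k v = 0 := by
      intro v hv
      apply image_eq_zero_of_notMem_tsupport
      intro hmem
      have h1 := hr hmem
      rw [Metric.mem_closedBall, Real.dist_eq, sub_zero] at h1
      have h2 : v ≤ r := (abs_le.1 h1).2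
      have h3 : r ≤ u := le_trans (le_max_left _ _) hu
      simp only [mem_Ioi] at hv
      linarith
    have hsplit := integral_add_compl (measurableSet_Iic (a := u)) hkint
    rw [compl_Iic] at hsplit
    rw [setIntegral_congr_fun measurableSet_Ioi hz, integral_zero] at hsplit
    rw [hK u, ← hkprob, ← hsplit, add_zero]
  · intro u hu
    have hz : ∀ v ∈ Iic u, k v = 0 := by
      intro v hv
      apply image_eq_zero_of_notMem_tsupport
      intro hmem
      have h1 := hr hmem
      rw [Metric.mem_closedBall, Real.dist_eq, sub_zero] at h1
      have h2 : -r ≤ v := (abs_le.1 h1).1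
      simp only [mem_Iic] at hv
      have h3 : -(max r 1) ≤ -r := neg_le_neg (le_max_left _ _)
      linarith
    rw [hK u, setIntegral_congr_fun measurableSet_Iic hz, integral_zero]
  · intro v hv
    apply image_eq_zero_of_notMem_tsupport
    intro hmem
    have h1 := hr hmem
    rw [Metric.mem_closedBall, Real.dist_eq, sub_zero] at h1
    have : |v| ≤ max r 1 := le_trans h1 (le_max_left _ _)
    linarith

lemma meanA {f f' f'' F k K : ℝ → ℝ} (x : ℝ)
    (hfnn : ∀ y, 0 ≤ f y) (hfint : Integrable f)
    (hF : ∀ y, HasDerivAt F (f y) y) (hf : ∀ y, HasDerivAt f (f' y) y)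
    (hf' : ∀ y, HasDerivAt f' (f'' y) y) {M : ℝ} (hM : ∀ y, |f'' y| ≤ M)
    (hknn : ∀ u, 0 ≤ k u) (hksymm : ∀ u, k (-u) = k u) (hkint : Integrable k)
    (hkprob : ∫ v, k v = 1) (hksupp : HasCompactSupport k)
    (hK : ∀ u, K u = ∫ v in Iic u, k v) :
    ∃ C : ℝ, 0 ≤ C ∧ ∀ h : ℝ, 0 < h →
      |(∫ y, (K ((x - y) / h) - if y ≤ x then (1 : ℝ) else 0) * f y)
        - h ^ 2 / 2 * (∫ v, v ^ 2 * k v) * f' x| ≤ C * h ^ 3 := by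
  obtain ⟨R, hR0, hKR1, hKR0, hkR⟩ := K_exists_R' hkint hK hksupp hkprob
  have hM0 : 0 ≤ M := le_trans (abs_nonneg _) (hM x)
  refine ⟨M * R ^ 3, by positivity, ?_⟩
  intro h hh
  -- integrability of v^j * k v
  have hvk_meas : AEStronglyMeasurable (fun v => v * k v) (volume : Measure ℝ) :=
    aestronglyMeasurable_id.mul hkint.1
  have hvk : Integrable (fun v => v * k v) := by
    refine (hkint.const_mul R).mono' hvk_meas (ae_of_all _ fun v => ?_)
    rw [Real.norm_eq_abs, abs_mul, abs_of_nonneg (hknn v)]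
    rcases le_or_gt (|v|) R with hv | hv
    · exact mul_le_mul_of_nonneg_right hv (hknn v)
    · rw [hkR v hv]; simp
  have hv2k : Integrable (fun v => v ^ 2 * k v) := by
    refine (hkint.const_mul (R ^ 2)).mono'
      (((measurable_id.pow_const 2).aestronglyMeasurable).mul hkint.1) (ae_of_all _ fun v => ?_)
    · rw [Real.norm_eq_abs, abs_mul, abs_of_nonneg (hknn v), abs_pow]
      rcases le_or_gt (|v|) R with hv | hv
      · exact mul_le_mul_of_nonneg_right (pow_le_pow_left₀ (abs_nonneg v) hv 2) (hknn v)
      · rw [hkR v hv]; simp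
  -- the Taylor remainder
  set T : ℝ → ℝ := fun v => F (x - h * v) - F x + h * v * f x - (h * v) ^ 2 / 2 * f' x with hT
  have hTbound : ∀ v, |T v| ≤ M * h ^ 3 * |v| ^ 3 := by
    intro v
    have h1 := taylor2' hF hf hf' hM x (x - h * v)
    have heq : x - h * v - x = -(h * v) := by ring
    rw [heq] at h1
    have h2 : |(-(h*v))| = h * |v| := by
      rw [abs_neg, abs_mul, abs_of_pos hh]
    calc |T v| = |F (x - h*v) - F x - (-(h*v)) * f x - (-(h*v)) ^ 2 / 2 * f' x| := by
          rw [hT]; ring_nf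
      _ ≤ M * |(-(h*v))| ^ 3 := h1
      _ = M * h ^ 3 * |v| ^ 3 := by rw [h2]; ring
  have hFcont : Continuous F := Differentiable.continuous (fun y => (hF y).differentiableAt)
  have hTcont : Continuous T := by
    have c1 : Continuous fun v : ℝ => x - h * v :=
      continuous_const.sub (continuous_const.mul continuous_id)
    exact (((hFcont.comp c1).sub continuous_const).add
      ((continuous_const.mul continuous_id).mul continuous_const)).sub
      ((((continuous_const.mul continuous_id).pow 2).div_const 2).mul continuous_const)
  have hptb : ∀ v, ‖k v * T v‖ ≤ M * R ^ 3 * h ^ 3 * k v := by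
    intro v
    rw [Real.norm_eq_abs, abs_mul, abs_of_nonneg (hknn v)]
    rcases le_or_gt (|v|) R with hv | hv
    · have hTv : |T v| ≤ M * R ^ 3 * h ^ 3 := by
        calc |T v| ≤ M * h ^ 3 * |v| ^ 3 := hTbound v
          _ ≤ M * h ^ 3 * R ^ 3 := by
              refine mul_le_mul_of_nonneg_left (pow_le_pow_left₀ (abs_nonneg v) hv 3) (by positivity)
          _ = M * R ^ 3 * h ^ 3 := by ring
      calc k v * |T v| ≤ k v * (M * R ^ 3 * h ^ 3) := mul_le_mul_of_nonneg_left hTv (hknn v)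
        _ = M * R ^ 3 * h ^ 3 * k v := by ring
    · rw [hkR v hv]; simp only [mul_zero, zero_mul]; positivity
  have hkT : Integrable (fun v => k v * T v) :=
    (hkint.const_mul (M * R ^ 3 * h ^ 3)).mono'
      (hkint.1.mul hTcont.aestronglyMeasurable) (ae_of_all _ hptb)
  -- pointwise Fubini identity
  set D : ℝ → ℝ → ℝ := fun v y =>
    (if y ≤ x - h * v then (1 : ℝ) else 0) - (if y ≤ x then (1 : ℝ) else 0) with hD
  have key : ∀ y, K ((x - y) / h) - (if y ≤ x then (1 : ℝ) else 0) = ∫ v, k v * D v y := by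
    intro y
    have hset : {v : ℝ | y ≤ x - h * v} = Iic ((x - y) / h) := by
      ext v
      simp only [mem_setOf_eq, mem_Iic]
      rw [le_div_iff₀ hh]
      constructor <;> intro hyp <;> nlinarith
    have e1 : (fun v => k v * (if y ≤ x - h * v then (1 : ℝ) else 0))
        = (Iic ((x - y) / h)).indicator k := by
      funext v
      rw [← hset, indicator_apply]
      by_cases hvy : y ≤ x - h * v <;> simp [hvy, mem_setOf_eq]
    have i1 : Integrable (fun v => k v * (if y ≤ x - h * v then (1 : ℝ) else 0)) := by
      rw [e1]; exact hkint.indicator measurableSet_Iic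
    have i2 : Integrable (fun v => k v * (if y ≤ x then (1 : ℝ) else 0)) := hkint.mul_const _
    have e3 : (fun v => k v * D v y) = fun v =>
        k v * (if y ≤ x - h * v then (1 : ℝ) else 0) - k v * (if y ≤ x then (1 : ℝ) else 0) := by
      funext v; simp only [hD]; ring
    rw [e3, integral_sub i1 i2, e1, integral_indicator measurableSet_Iic, ← hK,
      integral_mul_const, hkprob, one_mul]
  have hDmeas : Measurable (fun z : ℝ × ℝ => D z.2 z.1) := by
    apply Measurable.sub
    · exact Measurable.ite (measurableSet_le measurable_fst
        (measurable_const.sub (measurable_const.mul measurable_snd)))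
        measurable_const measurable_const
    · exact Measurable.ite (measurableSet_le measurable_fst measurable_const)
        measurable_const measurable_const
  have hDbd : ∀ v y, |D v y| ≤ 1 := by
    intro v y; simp only [hD]; split_ifs <;> norm_num
  have base : Integrable (fun z : ℝ × ℝ => f z.1 * k z.2)
      ((volume : Measure ℝ).prod volume) := hfint.mul_prod hkint
  have hprod : Integrable (fun z : ℝ × ℝ => k z.2 * D z.2 z.1 * f z.1)
      ((volume : Measure ℝ).prod volume) := by
    refine base.mono' ((base.1.mul hDmeas.aestronglyMeasurable).congr
      (ae_of_all _ fun z => by simp only [Pi.mul_apply]; ring)) (ae_of_all _ fun z => ?_)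
    rw [Real.norm_eq_abs, abs_mul, abs_mul, abs_of_nonneg (hknn _), abs_of_nonneg (hfnn _)]
    calc k z.2 * |D z.2 z.1| * f z.1 ≤ k z.2 * 1 * f z.1 :=
        mul_le_mul_of_nonneg_right (mul_le_mul_of_nonneg_left (hDbd _ _) (hknn _)) (hfnn _)
      _ = f z.1 * k z.2 := by ring
  have swap : (∫ y, ∫ v, (k v * D v y) * f y) = ∫ v, ∫ y, (k v * D v y) * f y := by
    apply integral_integral_swap (f := fun y v => (k v * D v y) * f y)
    exact hprod
  have hm : (∫ y, (K ((x - y) / h) - if y ≤ x then (1 : ℝ) else 0) * f y)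
      = ∫ v, k v * (F (x - h * v) - F x) := by
    have e0 : (fun y => (K ((x - y) / h) - if y ≤ x then (1 : ℝ) else 0) * f y)
        = fun y => ∫ v, (k v * D v y) * f y := by
      funext y
      rw [key y, ← integral_mul_const]
    rw [e0, swap]
    congr 1
    funext v
    have e1 : (fun y => (k v * D v y) * f y) = fun y => k v * (D v y * f y) := by
      funext y; ring
    rw [e1, integral_const_mul]
    congr 1
    have e2 : (fun y => D v y * f y)
        = fun y => (Iic (x - h * v)).indicator f y - (Iic x).indicator f y := by
      funext y; simp only [hD, indicator_apply, mem_Iic]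
      split_ifs <;> ring
    rw [e2, integral_sub (hfint.indicator measurableSet_Iic) (hfint.indicator measurableSet_Iic),
      integral_indicator measurableSet_Iic, integral_indicator measurableSet_Iic,
      intervalIntegral.integral_Iic_sub_Iic hfint.integrableOn hfint.integrableOn,
      intervalIntegral.integral_eq_sub_of_hasDerivAt (fun u _ => hF u)
        hfint.intervalIntegrable]
  have edecomp : (fun v => k v * (F (x - h * v) - F x))
      = fun v => (-(h * f x)) * (v * k v) + (h ^ 2 / 2 * f' x) * (v ^ 2 * k v) + k v * T v := by
    funext v; simp only [hT]; ring
  have hsum : (∫ v, k v * (F (x - h * v) - F x))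
      = (-(h * f x)) * (∫ v, v * k v) + (h ^ 2 / 2 * f' x) * (∫ v, v ^ 2 * k v)
        + ∫ v, k v * T v := by
    have ia : Integrable (fun v => (-(h * f x)) * (v * k v)) := hvk.const_mul _
    have ib : Integrable (fun v => (h ^ 2 / 2 * f' x) * (v ^ 2 * k v)) := hv2k.const_mul _
    have iab : Integrable (fun v =>
        (-(h * f x)) * (v * k v) + (h ^ 2 / 2 * f' x) * (v ^ 2 * k v)) := ia.add ib
    rw [edecomp, integral_add iab hkT, integral_add ia ib, integral_const_mul, integral_const_mul]
  have hodd : (∫ v, v * k v) = 0 := by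
    have h1 := integral_neg_eq_self (μ := (volume : Measure ℝ)) (fun v => v * k v)
    have h2 : (∫ v : ℝ, -(v * k v)) = ∫ v : ℝ, v * k v := by
      rw [← h1]; congr 1; funext v; show -(v * k v) = -v * k (-v); rw [hksymm]; ring
    rw [integral_neg] at h2
    linarith
  have hfinal : (∫ y, (K ((x - y) / h) - if y ≤ x then (1 : ℝ) else 0) * f y)
      - h ^ 2 / 2 * (∫ v, v ^ 2 * k v) * f' x = ∫ v, k v * T v := by
    rw [hm, hsum, hodd]; ring
  rw [hfinal]
  have hb := norm_integral_le_of_norm_le (hkint.const_mul (M * R ^ 3 * h ^ 3)) (ae_of_all _ hptb)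
  calc |∫ v, k v * T v| ≤ ∫ v, M * R ^ 3 * h ^ 3 * k v := by
        simpa [Real.norm_eq_abs] using hb
    _ = M * R ^ 3 * h ^ 3 := by rw [integral_const_mul, hkprob, mul_one]
    _ = M * R ^ 3 * h ^ 3 := by ring

lemma secondB {f k K : ℝ → ℝ} (x : ℝ)
    (hfnn : ∀ y, 0 ≤ f y) (hfint : Integrable f) (hfmeas : Measurable f)
    (hknn : ∀ u, 0 ≤ k u) (hkint : Integrable k)
    (hkprob : ∫ v, k v = 1) (hksupp : HasCompactSupport k)
    (hK : ∀ u, K u = ∫ v in Iic u, k v)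
    (h : ℕ → ℝ) (hhpos : ∀ᶠ n in atTop, 0 < h n) (hh0 : Tendsto h atTop (nhds 0)) :
    Tendsto (fun n => ∫ y,
        (K ((x - y) / h n) - if y ≤ x then (1 : ℝ) else 0) ^ 2 * f y) atTop (nhds 0) := by
  obtain ⟨R, hR0, hKR1, hKR0, hkR⟩ := K_exists_R' hkint hK hksupp hkprob
  have hKmono : Monotone K := by
    intro u u' huu'
    rw [hK u, hK u']
    exact setIntegral_mono_set hkint.integrableOn (ae_of_all _ hknn)
      (HasSubset.Subset.eventuallyLE (Iic_subset_Iic.2 huu'))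
  have hKnn : ∀ u, 0 ≤ K u := fun u => by
    rw [hK u]; exact setIntegral_nonneg measurableSet_Iic fun v _ => hknn v
  have hKle1 : ∀ u, K u ≤ 1 := fun u => by
    rw [hK u, ← hkprob]; exact setIntegral_le_integral hkint (ae_of_all _ hknn)
  have hKmeas : Measurable K := hKmono.measurable
  have hitemeas : Measurable (fun y : ℝ => if y ≤ x then (1 : ℝ) else 0) :=
    Measurable.ite (measurableSet_le measurable_id measurable_const)
      measurable_const measurable_const
  have hmeas : ∀ n : ℕ, AEStronglyMeasurable
      (fun y => (K ((x - y) / h n) - if y ≤ x then (1 : ℝ) else 0) ^ 2 * f y)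
      (volume : Measure ℝ) := by
    intro n
    exact ((((hKmeas.comp ((measurable_const.sub measurable_id).div_const _)).sub
      hitemeas).pow_const 2).mul hfmeas).aestronglyMeasurable
  have habs : ∀ u y, |K u - if y ≤ x then (1 : ℝ) else 0| ≤ 1 := by
    intro u y
    rw [abs_le]
    constructor <;> split_ifs <;> nlinarith [hKnn u, hKle1 u]
  have hbound : ∀ n : ℕ, ∀ᵐ y : ℝ ∂volume,
      ‖(K ((x - y) / h n) - if y ≤ x then (1 : ℝ) else 0) ^ 2 * f y‖ ≤ f y := by
    intro n
    refine ae_of_all _ fun y => ?_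
    rw [Real.norm_eq_abs, abs_mul, abs_of_nonneg (hfnn y), abs_pow]
    have h1 : |K ((x - y) / h n) - if y ≤ x then (1 : ℝ) else 0| ^ 2 ≤ 1 :=
      pow_le_one₀ (abs_nonneg _) (habs _ y)
    calc |K ((x - y) / h n) - if y ≤ x then (1 : ℝ) else 0| ^ 2 * f y
        ≤ 1 * f y := mul_le_mul_of_nonneg_right h1 (hfnn y)
      _ = f y := one_mul _
  have hne : ∀ᵐ y : ℝ ∂volume, y ≠ x := by
    have hs : {y : ℝ | ¬ y ≠ x} = {x} := by ext y; simp
    rw [ae_iff, hs]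
    exact Real.volume_singleton
  have hlim : ∀ᵐ y : ℝ ∂volume, Tendsto
      (fun n => (K ((x - y) / h n) - if y ≤ x then (1 : ℝ) else 0) ^ 2 * f y)
      atTop (nhds 0) := by
    filter_upwards [hne] with y hy
    have hev : ∀ᶠ n in atTop,
        (K ((x - y) / h n) - if y ≤ x then (1 : ℝ) else 0) ^ 2 * f y = 0 := by
      rcases lt_or_gt_of_ne hy with hyx | hyx
      · -- y < x
        have hpos : (0 : ℝ) < (x - y) / R := div_pos (by linarith) hR0
        filter_upwards [hhpos, hh0.eventually_lt_const hpos] with n h1 h2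
        have : R ≤ (x - y) / h n := by
          rw [le_div_iff₀ h1]
          calc R * h n ≤ R * ((x - y) / R) := by
                exact mul_le_mul_of_nonneg_left h2.le hR0.le
            _ = x - y := by field_simp
        rw [hKR1 _ this, if_pos hyx.le]
        ring
      · -- x < y
        have hpos : (0 : ℝ) < (y - x) / R := div_pos (by linarith) hR0
        filter_upwards [hhpos, hh0.eventually_lt_const hpos] with n h1 h2
        have : (x - y) / h n < -R := by
          rw [div_lt_iff₀ h1]
          have : R * h n < y - x := by
            calc R * h n < R * ((y - x) / R) := by
                  exact (mul_lt_mul_iff_right₀ hR0).2 h2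
              _ = y - x := by field_simp
          linarith
        rw [hKR0 _ this, if_neg (not_le.2 hyx)]
        ring
    exact Tendsto.congr' (hev.mono fun n hn => hn.symm) tendsto_const_nhds
  have := tendsto_integral_filter_of_dominated_convergence (μ := (volume : Measure ℝ))
    (F := fun n y => (K ((x - y) / h n) - if y ≤ x then (1 : ℝ) else 0) ^ 2 * f y)
    (f := fun _ => (0 : ℝ)) f (Eventually.of_forall hmeas) (Eventually.of_forall hbound)
    hfint hlim
  simpa using this

lemma cheb_bound {Ω : Type*} [MeasurableSpace Ω] (μ : Measure Ω) [IsProbabilityMeasure μ]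
    (n : ℕ) (hn : 1 ≤ n) (Y : ℕ → Ω → ℝ)
    (hYmeas : ∀ i, AEStronglyMeasurable (Y i) μ)
    (hYbdd : ∀ i ω, |Y i ω| ≤ 1)
    (hYindep : Pairwise fun i j => IndepFun (Y i) (Y j) μ)
    (m V c : ℝ) (hVnn : 0 ≤ V)
    (hYmean : ∀ i, ∫ ω, Y i ω ∂μ = m)
    (hYsq : ∀ i, ∫ ω, (Y i ω) ^ 2 ∂μ ≤ V)
    (hclose : c + 1 ≤ |Real.sqrt n * m|) (hc : 0 < c) :
    (μ {ω | |(Real.sqrt n / n) * ∑ i ∈ Finset.range n, Y i ω| ≤ c}).toReal ≤ V := by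
  have hn0 : ((n : ℝ)) ≠ 0 := Nat.cast_ne_zero.2 (by omega)
  have hnpos : (0 : ℝ) < n := by positivity
  have hY2 : ∀ i, MemLp (Y i) 2 μ := fun i =>
    MemLp.of_bound (hYmeas i) 1 (ae_of_all _ fun ω => by
      rw [Real.norm_eq_abs]; exact hYbdd i ω)
  have hYint : ∀ i, Integrable (Y i) μ := fun i => (hY2 i).integrable one_le_two
  set S : Ω → ℝ := ∑ i ∈ Finset.range n, Y i with hS
  have hS2 : MemLp S 2 μ := memLp_finset_sum' _ (fun i _ => hY2 i)
  have hT2 : MemLp ((Real.sqrt n / n) • S) 2 μ := hS2.const_smul _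
  have hESn : ∫ ω, S ω ∂μ = n * m := by
    rw [hS]
    simp only [Finset.sum_apply]
    rw [integral_finset_sum _ (fun i _ => hYint i)]
    simp [hYmean, Finset.sum_const, Finset.card_range, nsmul_eq_mul]
  have hET : ∫ ω, ((Real.sqrt n / n) • S) ω ∂μ = Real.sqrt n * m := by
    simp only [Pi.smul_apply, smul_eq_mul]
    rw [integral_const_mul, hESn]
    field_simp
  have hVarYle : ∀ i, variance (Y i) μ ≤ V := by
    intro i
    rw [variance_eq_sub (hY2 i)]
    have h1 := hYsq i
    have h2 : (∫ ω, (Y i ^ 2) ω ∂μ) = ∫ ω, (Y i ω) ^ 2 ∂μ := by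
      congr 1
    rw [h2, hYmean i]
    nlinarith [sq_nonneg m]
  have hVarS : variance S μ ≤ n * V := by
    rw [hS, IndepFun.variance_sum (fun i _ => hY2 i)
      (fun i _ j _ hij => hYindep hij)]
    calc (∑ i ∈ Finset.range n, variance (Y i) μ) ≤ ∑ _i ∈ Finset.range n, V :=
        Finset.sum_le_sum fun i _ => hVarYle i
      _ = n * V := by simp [Finset.sum_const, Finset.card_range, nsmul_eq_mul]
  have hVarT : variance ((Real.sqrt n / n) • S) μ ≤ V := by
    rw [variance_smul]
    have hsq : (Real.sqrt n / n) ^ 2 = 1 / n := by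
      rw [div_pow, Real.sq_sqrt hnpos.le]
      field_simp
    calc (Real.sqrt n / n) ^ 2 * variance S μ ≤ (Real.sqrt n / n) ^ 2 * (n * V) :=
        mul_le_mul_of_nonneg_left hVarS (sq_nonneg _)
      _ = V := by rw [hsq]; field_simp
  set d : ℝ := |Real.sqrt n * m| - c with hd
  have hd1 : 1 ≤ d := by rw [hd]; linarith
  have hdpos : 0 < d := by linarith
  have hsubset : {ω | |(Real.sqrt n / n) * ∑ i ∈ Finset.range n, Y i ω| ≤ c}
      ⊆ {ω | d ≤ |((Real.sqrt n / n) • S) ω - ∫ ω', ((Real.sqrt n / n) • S) ω' ∂μ|} := by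
    intro ω hω
    simp only [mem_setOf_eq] at hω ⊢
    rw [hET]
    have hTω : ((Real.sqrt n / n) • S) ω = (Real.sqrt n / n) * ∑ i ∈ Finset.range n, Y i ω := by
      simp [hS, Finset.sum_apply]
    have h1 : |Real.sqrt n * m| - |((Real.sqrt n / n) • S) ω|
        ≤ |((Real.sqrt n / n) • S) ω - Real.sqrt n * m| := by
      rw [abs_sub_comm]
      exact abs_sub_abs_le_abs_sub _ _
    rw [hTω] at h1 ⊢
    rw [hd]
    linarith
  have hcheb := meas_ge_le_variance_div_sq hT2 hdpos
  have hle := le_trans (measure_mono hsubset) hcheb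
  have hrhs : variance ((Real.sqrt n / n) • S) μ / d ^ 2 ≤ V := by
    calc variance ((Real.sqrt n / n) • S) μ / d ^ 2
        ≤ variance ((Real.sqrt n / n) • S) μ := by
          apply div_le_self (variance_nonneg _ _)
          nlinarith
      _ ≤ V := hVarT
  have := ENNReal.toReal_le_of_le_ofReal
    (div_nonneg (variance_nonneg _ _) (sq_nonneg d)) hle
  linarith

theorem smoothed_cdf_escapes_band_optimal_bandwidth
    {Ω : Type*} [MeasurableSpace Ω] (μ : Measure Ω) [IsProbabilityMeasure μ]
    (X : ℕ → Ω → ℝ) (hXmeas : ∀ i, Measurable (X i))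
    (hindep : iIndepFun X μ)
    (f f' f'' F : ℝ → ℝ)
    (hfnn : ∀ y, 0 ≤ f y)
    (hfint : Integrable f)
    (hfprob : ∫ y, f y = 1)
    (hlaw : ∀ i, μ.map (X i) = volume.withDensity (fun y => ENNReal.ofReal (f y)))
    (hF : ∀ y, HasDerivAt F (f y) y)
    (hf : ∀ y, HasDerivAt f (f' y) y)
    (hf' : ∀ y, HasDerivAt f' (f'' y) y)
    (hf''cont : Continuous f'')
    (hf''bdd : ∃ M, ∀ y, |f'' y| ≤ M)
    (x : ℝ) (hfx : 0 < f x) (hf'x : f' x ≠ 0)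
    (k K : ℝ → ℝ)
    (hknn : ∀ u, 0 ≤ k u)
    (hksymm : ∀ u, k (-u) = k u)
    (hkint : Integrable k)
    (hkprob : ∫ v, k v = 1)
    (hksupp : HasCompactSupport k)
    (hK : ∀ u, K u = ∫ v in Iic u, k v)
    (hk₂ : 0 < ∫ v, v ^ 2 * k v)
    (a : ℝ) (ha : 0 < a)
    (h : ℕ → ℝ) (hh : ∀ n : ℕ, h n = a * (n : ℝ) ^ (-(1 / 5 : ℝ)))
    (c : ℝ) (hc : 0 < c) :
    Tendsto (fun n : ℕ =>
        (μ {ω | |Real.sqrt n *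
            ((1 / n : ℝ) * (∑ i ∈ Finset.range n, K ((x - X i ω) / h n))
              - (1 / n : ℝ) * (∑ i ∈ Finset.range n,
                  (if X i ω ≤ x then (1 : ℝ) else 0)))| ≤ c}).toReal)
      atTop (nhds 0) := by
  have hfcont : Continuous f := Differentiable.continuous (fun y => (hf y).differentiableAt)
  have hfmeas : Measurable f := hfcont.measurable
  obtain ⟨M, hM⟩ := hf''bdd
  obtain ⟨C, hC0, hCb⟩ := meanA x hfnn hfint hF hf hf' hM hknn hksymm hkint hkprob hksupp hK
  -- K facts
  have hKmono : Monotone K := by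
    intro u u' huu'
    rw [hK u, hK u']
    exact setIntegral_mono_set hkint.integrableOn (ae_of_all _ hknn)
      (HasSubset.Subset.eventuallyLE (Iic_subset_Iic.2 huu'))
  have hKnn : ∀ u, 0 ≤ K u := fun u => by
    rw [hK u]; exact setIntegral_nonneg measurableSet_Iic fun v _ => hknn v
  have hKle1 : ∀ u, K u ≤ 1 := fun u => by
    rw [hK u, ← hkprob]; exact setIntegral_le_integral hkint (ae_of_all _ hknn)
  have hKmeas : Measurable K := hKmono.measurable
  have hitemeas : Measurable (fun y : ℝ => if y ≤ x then (1 : ℝ) else 0) :=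
    Measurable.ite (measurableSet_le measurable_id measurable_const)
      measurable_const measurable_const
  have hgmeas : ∀ n : ℕ,
      Measurable (fun y => K ((x - y) / h n) - if y ≤ x then (1 : ℝ) else 0) := fun n =>
    (hKmeas.comp ((measurable_const.sub measurable_id).div_const _)).sub hitemeas
  have hgabs : ∀ (u y : ℝ), |K u - if y ≤ x then (1 : ℝ) else 0| ≤ 1 := by
    intro u y
    rw [abs_le]
    constructor <;> split_ifs <;> nlinarith [hKnn u, hKle1 u]
  -- bandwidth facts
  have hhpos' : ∀ n : ℕ, 1 ≤ n → 0 < h n := by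
    intro n hn
    rw [hh]
    have hn0 : (0 : ℝ) < (n : ℝ) := by exact_mod_cast hn
    exact mul_pos ha (Real.rpow_pos_of_pos hn0 _)
  have hhpos : ∀ᶠ n in atTop, 0 < h n := eventually_atTop.2 ⟨1, hhpos'⟩
  have hh0 : Tendsto h atTop (nhds 0) := by
    have h1 : Tendsto (fun n : ℕ => ((n : ℝ)) ^ (-(1 / 5 : ℝ))) atTop (nhds 0) :=
      (tendsto_rpow_neg_atTop (by norm_num)).comp tendsto_natCast_atTop_atTop
    have h2 := h1.const_mul a
    rw [mul_zero] at h2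
    exact h2.congr fun n => (hh n).symm
  -- main quantities
  set mfun : ℕ → ℝ :=
    fun n => ∫ y, (K ((x - y) / h n) - if y ≤ x then (1 : ℝ) else 0) * f y with hmfun
  set Vfun : ℕ → ℝ :=
    fun n => ∫ y, (K ((x - y) / h n) - if y ≤ x then (1 : ℝ) else 0) ^ 2 * f y with hVfun
  have hV0 : Tendsto Vfun atTop (nhds 0) :=
    secondB x hfnn hfint hfmeas hknn hkint hkprob hksupp hK h hhpos hh0
  -- transfer of laws
  have hnu : ∀ (g : ℝ → ℝ), Measurable g → ∀ i, ∫ ω, g (X i ω) ∂μ = ∫ y, g y * f y := by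
    intro g hg i
    rw [← integral_map (hXmeas i).aemeasurable hg.aestronglyMeasurable, hlaw i]
    rw [show (fun y => ENNReal.ofReal (f y)) = (fun y => ((f y).toNNReal : ENNReal)) from rfl]
    rw [integral_withDensity_eq_integral_smul hfmeas.real_toNNReal g]
    congr 1
    funext y
    rw [NNReal.smul_def, Real.coe_toNNReal _ (hfnn y), smul_eq_mul, mul_comm]
  -- rpow computations
  have hpow : ∀ n : ℕ, 1 ≤ n →
      Real.sqrt n * (h n) ^ 2 = a ^ 2 * (n : ℝ) ^ ((1 : ℝ) / 10) ∧
      Real.sqrt n * (h n) ^ 3 ≤ a ^ 3 := by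
    intro n hn
    have hn0 : (0 : ℝ) < (n : ℝ) := by exact_mod_cast hn
    have hn1 : (1 : ℝ) ≤ (n : ℝ) := by exact_mod_cast hn
    have e2 : ((n : ℝ) ^ (-(1 / 5 : ℝ))) ^ (2 : ℕ) = (n : ℝ) ^ (-(2 / 5 : ℝ)) := by
      rw [← Real.rpow_natCast ((n : ℝ) ^ (-(1 / 5 : ℝ))) 2, ← Real.rpow_mul hn0.le]
      norm_num
    have e3 : ((n : ℝ) ^ (-(1 / 5 : ℝ))) ^ (3 : ℕ) = (n : ℝ) ^ (-(3 / 5 : ℝ)) := by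
      rw [← Real.rpow_natCast ((n : ℝ) ^ (-(1 / 5 : ℝ))) 3, ← Real.rpow_mul hn0.le]
      norm_num
    constructor
    · rw [hh n, Real.sqrt_eq_rpow, mul_pow, e2,
        show (1 : ℝ) / 10 = 1 / 2 + -(2 / 5) by norm_num, Real.rpow_add hn0]
      ring
    · rw [hh n, Real.sqrt_eq_rpow, mul_pow, e3]
      have e4 : (n : ℝ) ^ ((1 : ℝ) / 2) * (a ^ 3 * (n : ℝ) ^ (-(3 / 5 : ℝ)))
          = a ^ 3 * (n : ℝ) ^ (-(1 / 10 : ℝ)) := by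
        rw [show -(1 / 10 : ℝ) = 1 / 2 + -(3 / 5) by norm_num, Real.rpow_add hn0]
        ring
      rw [e4]
      have h1 : (n : ℝ) ^ (-(1 / 10 : ℝ)) ≤ 1 :=
        Real.rpow_le_one_of_one_le_of_nonpos hn1 (by norm_num)
      calc a ^ 3 * (n : ℝ) ^ (-(1 / 10 : ℝ)) ≤ a ^ 3 * 1 :=
          mul_le_mul_of_nonneg_left h1 (by positivity)
        _ = a ^ 3 := mul_one _
  -- lower bound on the mean
  set q : ℝ := a ^ 2 * (∫ v, v ^ 2 * k v) * |f' x| / 2 with hq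
  have hqpos : 0 < q := by
    rw [hq]
    exact div_pos (mul_pos (mul_pos (pow_pos ha 2) hk₂) (abs_pos.2 hf'x)) two_pos
  have hlower : ∀ n : ℕ, 1 ≤ n →
      q * (n : ℝ) ^ ((1 : ℝ) / 10) - C * a ^ 3 ≤ |Real.sqrt n * mfun n| := by
    intro n hn
    have hhn := hhpos' n hn
    have hb := hCb (h n) hhn
    have hs : (0 : ℝ) ≤ Real.sqrt n := Real.sqrt_nonneg _
    have h1 : |Real.sqrt n * mfun n
        - Real.sqrt n * ((h n) ^ 2 / 2 * (∫ v, v ^ 2 * k v) * f' x)|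
        ≤ C * (Real.sqrt n * (h n) ^ 3) := by
      rw [← mul_sub, abs_mul, abs_of_nonneg hs]
      calc Real.sqrt n * |mfun n - (h n) ^ 2 / 2 * (∫ v, v ^ 2 * k v) * f' x|
          ≤ Real.sqrt n * (C * (h n) ^ 3) := mul_le_mul_of_nonneg_left hb hs
        _ = C * (Real.sqrt n * (h n) ^ 3) := by ring
    have h2 : C * (Real.sqrt n * (h n) ^ 3) ≤ C * a ^ 3 :=
      mul_le_mul_of_nonneg_left (hpow n hn).2 hC0
    have h3 : |Real.sqrt n * ((h n) ^ 2 / 2 * (∫ v, v ^ 2 * k v) * f' x)|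
        = q * (n : ℝ) ^ ((1 : ℝ) / 10) := by
      have e1 : Real.sqrt n * ((h n) ^ 2 / 2 * (∫ v, v ^ 2 * k v) * f' x)
          = (Real.sqrt n * (h n) ^ 2) * ((∫ v, v ^ 2 * k v) * f' x) / 2 := by ring
      rw [e1, (hpow n hn).1, abs_div, abs_mul,
        abs_of_nonneg (show (0 : ℝ) ≤ a ^ 2 * (n : ℝ) ^ ((1 : ℝ) / 10) by positivity),
        abs_mul, abs_of_nonneg hk₂.le, hq]
      rw [abs_two]
      ring
    have h4 := abs_sub_abs_le_abs_sub
      (Real.sqrt n * ((h n) ^ 2 / 2 * (∫ v, v ^ 2 * k v) * f' x)) (Real.sqrt n * mfun n)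
    rw [abs_sub_comm] at h4
    rw [h3] at h4
    linarith
  have hbase : Tendsto (fun n : ℕ => q * (n : ℝ) ^ ((1 : ℝ) / 10) - C * a ^ 3) atTop atTop := by
    have hmul : Tendsto (fun n : ℕ => q * (n : ℝ) ^ ((1 : ℝ) / 10)) atTop atTop :=
      ((tendsto_rpow_atTop (by norm_num)).comp tendsto_natCast_atTop_atTop).const_mul_atTop hqpos
    simpa [sub_eq_add_neg] using tendsto_atTop_add_const_right atTop (-(C * a ^ 3)) hmul
  have htends : Tendsto (fun n : ℕ => |Real.sqrt n * mfun n|) atTop atTop :=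
    tendsto_atTop_mono' atTop (eventually_atTop.2 ⟨1, hlower⟩) hbase
  have hev1 : ∀ᶠ n : ℕ in atTop, c + 1 ≤ |Real.sqrt n * mfun n| :=
    htends.eventually_ge_atTop (c + 1)
  -- per-n Chebyshev bound
  have key : ∀ n : ℕ, 1 ≤ n → c + 1 ≤ |Real.sqrt n * mfun n| →
      (μ {ω | |Real.sqrt n *
          ((1 / n : ℝ) * (∑ i ∈ Finset.range n, K ((x - X i ω) / h n))
            - (1 / n : ℝ) * (∑ i ∈ Finset.range n,
                (if X i ω ≤ x then (1 : ℝ) else 0)))| ≤ c}).toReal ≤ Vfun n := by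
    intro n hn hclose
    have hreal : ∀ ω, Real.sqrt n *
        ((1 / n : ℝ) * (∑ i ∈ Finset.range n, K ((x - X i ω) / h n))
          - (1 / n : ℝ) * (∑ i ∈ Finset.range n, (if X i ω ≤ x then (1 : ℝ) else 0)))
        = (Real.sqrt n / n) * ∑ i ∈ Finset.range n,
            (K ((x - X i ω) / h n) - if X i ω ≤ x then (1 : ℝ) else 0) := by
      intro ω
      rw [Finset.sum_sub_distrib]
      ring
    have hsetEq : {ω | |Real.sqrt n *
        ((1 / n : ℝ) * (∑ i ∈ Finset.range n, K ((x - X i ω) / h n))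
          - (1 / n : ℝ) * (∑ i ∈ Finset.range n, (if X i ω ≤ x then (1 : ℝ) else 0)))| ≤ c}
        = {ω | |(Real.sqrt n / n) * ∑ i ∈ Finset.range n,
            (K ((x - X i ω) / h n) - if X i ω ≤ x then (1 : ℝ) else 0)| ≤ c} := by
      ext ω
      simp only [mem_setOf_eq, hreal]
    rw [hsetEq]
    have hcomp := hindep.comp
      (fun _ => fun y => K ((x - y) / h n) - if y ≤ x then (1 : ℝ) else 0)
      (fun _ => hgmeas n)
    refine cheb_bound μ n hn
      (fun i ω => K ((x - X i ω) / h n) - if X i ω ≤ x then (1 : ℝ) else 0)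
      (fun i => ((hgmeas n).comp (hXmeas i)).aestronglyMeasurable)
      (fun i ω => hgabs _ _)
      (fun i j hij => hcomp.indepFun hij)
      (mfun n) (Vfun n) c
      (integral_nonneg fun y => mul_nonneg (sq_nonneg _) (hfnn y))
      (fun i => hnu _ (hgmeas n) i)
      (fun i => le_of_eq (hnu _ ((hgmeas n).pow_const 2) i))
      hclose hc
  -- squeeze
  apply tendsto_of_tendsto_of_tendsto_of_le_of_le' tendsto_const_nhds hV0
  · exact Eventually.of_forall fun n => ENNReal.toReal_nonneg
  · filter_upwards [hev1, eventually_ge_atTop 1] with n h1 h2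
    exact key n h2 h1
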